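/- Let X and Y be bounded linear operators on a Banach algebra (or elements of a Banach algebra). Then e^{X+Y} - e^X = ∫_0^1 e^{αX} Y e^{(1-α)(X+Y)} dα. -/

import Mathlib

open MeasureTheory

/-- **Duhamel formula.** For elements `X Y` of a Banach algebra,
`e^{X+Y} - e^X = ∫_0^1 e^{αX} Y e^{(1-α)(X+Y)} dα`. -/
theorem duhamel_exp_sub_exp {A : Type*} [NormedRing A] [NormedAlgebra ℝ A]
    [CompleteSpace A] (X Y : A) :
    NormedSpace.exp (X + Y) - NormedSpace.exp X =
      ∫ α in (0:ℝ)..1,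
        NormedSpace.exp (α • X) * Y * NormedSpace.exp ((1 - α) • (X + Y)) := by
  set f : ℝ → A := fun α => NormedSpace.exp (α • X) * NormedSpace.exp ((1 - α) • (X + Y))
    with hf
  have hderiv : ∀ α : ℝ, HasDerivAt f
      (-(NormedSpace.exp (α • X) * Y * NormedSpace.exp ((1 - α) • (X + Y)))) α := by
    intro α
    have h1 : HasDerivAt (fun u : ℝ => NormedSpace.exp (u • X))
        (NormedSpace.exp (α • X) * X) α := hasDerivAt_exp_smul_const X α
    have h2 : HasDerivAt (fun u : ℝ => NormedSpace.exp ((1 - u) • (X + Y)))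
        (-((X + Y) * NormedSpace.exp ((1 - α) • (X + Y)))) α := by
      have hg : HasDerivAt (fun u : ℝ => 1 - u) (-1) α := by
        simpa using (hasDerivAt_id α).const_sub 1
      have := (hasDerivAt_exp_smul_const' (𝕂 := ℝ) (X + Y) (1 - α)).scomp α hg
      rw [neg_one_smul] at this
      exact this
    have := h1.mul h2
    convert this using 1
    · rfl
    simp only [mul_neg, mul_add, add_mul, mul_assoc]
    abel
  have hcont : Continuous fun α : ℝ =>
      NormedSpace.exp (α • X) * Y * NormedSpace.exp ((1 - α) • (X + Y)) := by
    have he : Continuous (NormedSpace.exp : A → A) :=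
      continuous_iff_continuousAt.2 fun x => (NormedSpace.exp_analytic (𝕂 := ℝ) x).continuousAt
    continuity
  have hint : ∀ α ∈ Set.uIcc (0:ℝ) 1, HasDerivAt f
      (-(NormedSpace.exp (α • X) * Y * NormedSpace.exp ((1 - α) • (X + Y)))) α :=
    fun α _ => hderiv α
  have key := intervalIntegral.integral_eq_sub_of_hasDerivAt hint
    ((hcont.neg).intervalIntegrable 0 1)
  rw [intervalIntegral.integral_neg] at key
  have hf0 : f 0 = NormedSpace.exp (X + Y) := by
    simp [hf, NormedSpace.exp_zero]
  have hf1 : f 1 = NormedSpace.exp X := by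
    simp [hf, NormedSpace.exp_zero]
  rw [hf1, hf0] at key
  rw [← neg_sub, ← key, neg_neg]
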